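/- Let E be a real inner product space, let K be a complete subspace of E, and let P : E → E denote the orthogonal projection onto K. Then for every positive integer m and all vectors v₁, …, v_m ∈ E, the Gram determinants satisfy det(⟨P v_i, P v_j⟩)_{1 ≤ i,j ≤ m} ≤ det(⟨v_i, v_j⟩)_{1 ≤ i,j ≤ m}. -/

import Mathlib

open RealInnerProductSpace

open Matrix in
lemma one_le_det_one_add_psd {n : ℕ} {M : Matrix (Fin n) (Fin n) ℝ}
    (hM : M.PosSemidef) : 1 ≤ (1 + M).det := by
  have hH := hM.1
  have hspec := hH.spectral_theorem
  set U : Matrix (Fin n) (Fin n) ℝ := (hH.eigenvectorUnitary : Matrix (Fin n) (Fin n) ℝ)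
  have hU : U * star U = 1 := (Matrix.mem_unitaryGroup_iff).mp hH.eigenvectorUnitary.2
  have h1 : (1 : Matrix (Fin n) (Fin n) ℝ) + M
      = U * (1 + diagonal (RCLike.ofReal ∘ hH.eigenvalues)) * star U := by
    rw [mul_add, add_mul, mul_one, hU]
    nth_rewrite 1 [hspec]
    rfl
  rw [h1, Matrix.det_mul_right_comm, hU, one_mul]
  have : (1 : Matrix (Fin n) (Fin n) ℝ) + diagonal (RCLike.ofReal ∘ hH.eigenvalues)
      = diagonal (fun i => 1 + hH.eigenvalues i) := by
    rw [← Matrix.diagonal_one, Matrix.diagonal_add]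
    rfl
  rw [this, Matrix.det_diagonal]
  calc (1:ℝ) = ∏ _i : Fin n, 1 := by simp
    _ ≤ ∏ i, (1 + hH.eigenvalues i) := by
        apply Finset.prod_le_prod
        · intro; simp
        · intro i _
          have := hM.eigenvalues_nonneg i
          linarith

open Matrix in
lemma psd_det_nonneg {n : ℕ} {M : Matrix (Fin n) (Fin n) ℝ} (hM : M.PosSemidef) :
    0 ≤ M.det := by
  rw [hM.1.det_eq_prod_eigenvalues]
  exact Finset.prod_nonneg fun i _ => by exact_mod_cast hM.eigenvalues_nonneg i

open scoped MatrixOrder in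
open Matrix in
lemma det_le_det_add_psd {n : ℕ} {A B : Matrix (Fin n) (Fin n) ℝ}
    (hA : A.PosSemidef) (hB : B.PosSemidef) : A.det ≤ (A + B).det := by
  by_cases hdet : IsUnit A.det
  · set S := CFC.sqrt A with hSdef
    have hS : S.PosSemidef := Matrix.nonneg_iff_posSemidef.mp (CFC.sqrt_nonneg A)
    have hSS : S * S = A := CFC.sqrt_mul_sqrt_self A (Matrix.nonneg_iff_posSemidef.mpr hA)
    have hSdet : IsUnit S.det := by
      have : S.det * S.det = A.det := by rw [← Matrix.det_mul, hSS]
      exact isUnit_of_mul_isUnit_left (this ▸ hdet)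
    have hSinv : S * S⁻¹ = 1 := Matrix.mul_nonsing_inv S hSdet
    have hSinv' : S⁻¹ * S = 1 := Matrix.nonsing_inv_mul S hSdet
    have hMher : (S⁻¹)ᴴ = S⁻¹ := hS.1.inv
    have hM : (S⁻¹ * B * (S⁻¹)ᴴ).PosSemidef := hB.mul_mul_conjTranspose_same _
    rw [hMher] at hM
    have key : A + B = S * (1 + S⁻¹ * B * S⁻¹) * S := by
      rw [mul_add, add_mul, mul_one, hSS]
      congr 1
      symm
      calc S * (S⁻¹ * B * S⁻¹) * S = (S * S⁻¹) * B * (S⁻¹ * S) := by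
            simp only [mul_assoc]
        _ = B := by rw [hSinv, hSinv', one_mul, mul_one]
      
    rw [key, Matrix.det_mul, Matrix.det_mul, mul_right_comm]
    have hA' : S.det * S.det = A.det := by rw [← Matrix.det_mul, hSS]
    rw [hA']
    nth_rewrite 1 [← mul_one A.det]
    exact mul_le_mul_of_nonneg_left (one_le_det_one_add_psd hM)
      (psd_det_nonneg hA)
  · have h0 : A.det = 0 := by simpa [isUnit_iff_ne_zero] using hdet
    rw [h0]
    exact psd_det_nonneg (hA.add hB)

open Matrix in
lemma gram_posSemidef {E : Type*} [NormedAddCommGroup E] [InnerProductSpace ℝ E]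
    {m : ℕ} (u : Fin m → E) :
    (Matrix.of fun i j : Fin m => (⟪u i, u j⟫ : ℝ)).PosSemidef := by
  refine Matrix.PosSemidef.of_dotProduct_mulVec_nonneg ?_ ?_
  · ext i j
    simp [Matrix.conjTranspose_apply, real_inner_comm]
  · intro x
    have : dotProduct (star x) ((Matrix.of fun i j : Fin m => (⟪u i, u j⟫ : ℝ)) *ᵥ x)
        = ⟪∑ i, x i • u i, ∑ j, x j • u j⟫ := by
      rw [sum_inner]
      simp only [inner_sum, real_inner_smul_left, real_inner_smul_right, dotProduct, mulVec,
        dotProduct, Matrix.of_apply, star_trivial]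
      congr 1
      ext i
      rw [Finset.mul_sum]
      congr 1
      ext j
      ring
    rw [this]
    exact real_inner_self_nonneg

theorem stmt_13 {E : Type*} [NormedAddCommGroup E] [InnerProductSpace ℝ E]
    (K : Submodule ℝ E) [CompleteSpace K] (m : ℕ) (hm : 0 < m) (v : Fin m → E) :
    (Matrix.of fun i j : Fin m =>
        ⟪((K.orthogonalProjectionOnto (v i) : K) : E), ((K.orthogonalProjectionOnto (v j) : K) : E)⟫).det ≤
    (Matrix.of fun i j : Fin m => ⟪v i, v j⟫).det := by
  set a : Fin m → E := fun i => ((K.orthogonalProjectionOnto (v i) : K) : E) with ha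
  set b : Fin m → E := fun i => v i - a i with hb
  have hsplit : (Matrix.of fun i j : Fin m => (⟪v i, v j⟫ : ℝ))
      = (Matrix.of fun i j : Fin m => (⟪a i, a j⟫ : ℝ))
        + (Matrix.of fun i j : Fin m => (⟪b i, b j⟫ : ℝ)) := by
    ext i j
    have hib : b i ∈ Kᗮ := K.sub_starProjection_mem_orthogonal (v i)
    have hjb : b j ∈ Kᗮ := K.sub_starProjection_mem_orthogonal (v j)
    have haj : a j ∈ K := (K.orthogonalProjectionOnto (v j)).2
    have hai : a i ∈ K := (K.orthogonalProjectionOnto (v i)).2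
    have h1 : (⟪b i, a j⟫ : ℝ) = 0 := by rw [real_inner_comm]; exact hib (a j) haj
    have h2 : (⟪a i, b j⟫ : ℝ) = 0 := hjb (a i) hai
    have hv : v i = a i + b i := by simp [hb]
    have hv' : v j = a j + b j := by simp [hb]
    simp only [Matrix.add_apply, Matrix.of_apply]
    rw [hv, hv', inner_add_left, inner_add_right, inner_add_right, h1, h2]
    ring
  rw [hsplit]
  exact det_le_det_add_psd (gram_posSemidef a) (gram_posSemidef b)
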